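/- For every β > 0, the ratio D̃(2n)/D(n) converges, as n → ∞, to D(β) := 16(β+1)(β²+3β+3) / ((β+2)(β²+6β+12)), where D(n) is the determinant of the Fisher information matrix for the design ξ_n = {0, 1/n, …, 1} on [0,1] (n+1 points, step 1/n) and D̃(2n) is the determinant for the design ξ̃_{2n} = {0, 1/n, …, 2} on [0,2] (2n+1 points, step 1/n). -/

import Mathlib

open Real Filter

/-- Entry `L1` of the Fisher information matrix for an equidistant design with
`n` points and step size `d`, covariance parameter `β`. -/
noncomputable def L1 (β : ℝ) (n : ℕ) (d : ℝ) : ℝ :=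
  (2 - (n : ℝ) + n * exp (β * d)) / (exp (β * d) + 1)

/-- Entry `L2` of the Fisher information matrix. -/
noncomputable def L2 (β : ℝ) (n : ℕ) (d : ℝ) : ℝ :=
  d * ((n : ℝ) - 1) / 2 * L1 β n d

/-- Entry `L3` of the Fisher information matrix. -/
noncomputable def L3 (β : ℝ) (n : ℕ) (d : ℝ) : ℝ :=
  d ^ 2 * ((n : ℝ) - 1) / (exp (2 * β * d) - 1) *
    ((n : ℝ) * (2 * n - 1) * (exp (β * d) - 1) ^ 2 / 6 + n * (exp (β * d) - 1) + 1)
/-- Determinant of the Fisher information matrix for the equidistant design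
`ξ_n = {0, 1/n, …, 1}` on `[0,1]` (`n+1` points with step `1/n`). -/
noncomputable def Dn (β : ℝ) (n : ℕ) : ℝ :=
  L1 β (n + 1) (1 / n) * L3 β (n + 1) (1 / n) - L2 β (n + 1) (1 / n) ^ 2

/-- Determinant of the Fisher information matrix for the equidistant design
`ξ̃_{2n} = {0, 1/n, …, 2}` on `[0,2]` (`2n+1` points with step `1/n`). -/
noncomputable def Dtilde (β : ℝ) (n : ℕ) : ℝ :=
  L1 β (2 * n + 1) (1 / n) * L3 β (2 * n + 1) (1 / n) - L2 β (2 * n + 1) (1 / n) ^ 2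

lemma tendsto_nat_mul_exp_div_sub_one (c : ℝ) (hc : 0 < c) :
    Tendsto (fun n : ℕ => (n : ℝ) * (exp (c / n) - 1)) atTop (nhds c) := by
  have h1 : Tendsto (fun x : ℝ => (exp x - 1) / x) (nhdsWithin 0 {(0:ℝ)}ᶜ) (nhds 1) := by
    have h := Real.hasDerivAt_exp 0
    rw [hasDerivAt_iff_tendsto_slope] at h
    simp only [Real.exp_zero] at h
    refine h.congr ?_
    intro x
    simp [slope_def_field]
  have h2 : Tendsto (fun n : ℕ => c / n) atTop (nhdsWithin 0 {(0:ℝ)}ᶜ) := by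
    apply tendsto_nhdsWithin_of_tendsto_nhds_of_eventually_within
    · exact tendsto_const_nhds.div_atTop tendsto_natCast_atTop_atTop
    · filter_upwards [eventually_ge_atTop 1] with n hn
      have hn' : (0:ℝ) < n := by exact_mod_cast Nat.lt_of_lt_of_le Nat.zero_lt_one hn
      simp only [Set.mem_compl_iff, Set.mem_singleton_iff]
      positivity
  have h3 := (h1.comp h2).mul_const c
  rw [one_mul] at h3
  refine h3.congr' ?_
  filter_upwards [eventually_ge_atTop 1] with n hn
  have hn' : (0:ℝ) < n := by exact_mod_cast Nat.lt_of_lt_of_le Nat.zero_lt_one hn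
  have hc' : c ≠ 0 := hc.ne'
  simp only [Function.comp_apply]
  field_simp

/-- Doubling the design interval: `D̃(2n)/D(n) → D(β) = 16(β+1)(β²+3β+3) /
((β+2)(β²+6β+12))`. -/
theorem D_interval_double_ratio (β : ℝ) (hβ : 0 < β) :
    Tendsto (fun n : ℕ => Dtilde β n / Dn β n) atTop
      (nhds (16 * (β + 1) * (β ^ 2 + 3 * β + 3) / ((β + 2) * (β ^ 2 + 6 * β + 12)))) := by
  set t : ℕ → ℝ := fun n => (n : ℝ) * (exp (β / n) - 1) with ht_def
  set s : ℕ → ℝ := fun n => (n : ℝ) * (exp (2 * β / n) - 1) with hs_def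
  set e : ℕ → ℝ := fun n => exp (β / n) with he_def
  have ht : Tendsto t atTop (nhds β) := tendsto_nat_mul_exp_div_sub_one β hβ
  have hs : Tendsto s atTop (nhds (2 * β)) :=
    tendsto_nat_mul_exp_div_sub_one (2 * β) (by linarith)
  have he : Tendsto e atTop (nhds 1) := by
    have h0 : Tendsto (fun n : ℕ => β / n) atTop (nhds 0) :=
      tendsto_const_nhds.div_atTop tendsto_natCast_atTop_atTop
    have := (Real.continuous_exp.tendsto 0).comp h0
    rw [Real.exp_zero] at this
    exact this
  have hβ' : β ≠ 0 := ne_of_gt hβ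
  -- eventual rewriting of Dn
  have hDnEq : ∀ᶠ n : ℕ in atTop, Dn β n =
      (2 + t n + (e n - 1)) / (e n + 1) *
        ((1 / s n) * ((t n + (e n - 1)) * (2 * t n + (e n - 1)) / 6 + (t n + (e n - 1)) + 1))
      - ((2 + t n + (e n - 1)) / (e n + 1) / 2) ^ 2 := by
    filter_upwards [eventually_ge_atTop 1] with n hn
    have hn' : (0:ℝ) < n := by exact_mod_cast Nat.lt_of_lt_of_le Nat.zero_lt_one hn
    have hE2 : 1 < exp (2 * β / n) := by
      rw [show (1:ℝ) = exp 0 by simp]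
      apply Real.exp_lt_exp.mpr
      positivity
    have hE2' : exp (2 * β / n) - 1 ≠ 0 := by linarith
    have hE1 : (0:ℝ) < exp (β / n) + 1 := by positivity
    have hsn : s n ≠ 0 := by
      simp only [hs_def]; positivity
    simp only [Dn, L1, L2, L3, ht_def, hs_def, he_def, mul_one_div]
    push_cast
    field_simp
    ring
  -- eventual rewriting of Dtilde
  have hDtEq : ∀ᶠ n : ℕ in atTop, Dtilde β n =
      (2 + 2 * t n + (e n - 1)) / (e n + 1) *
        ((2 / s n) * ((2 * t n + (e n - 1)) * (4 * t n + (e n - 1)) / 6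
          + (2 * t n + (e n - 1)) + 1))
      - ((2 + 2 * t n + (e n - 1)) / (e n + 1)) ^ 2 := by
    filter_upwards [eventually_ge_atTop 1] with n hn
    have hn' : (0:ℝ) < n := by exact_mod_cast Nat.lt_of_lt_of_le Nat.zero_lt_one hn
    have hE2 : 1 < exp (2 * β / n) := by
      rw [show (1:ℝ) = exp 0 by simp]
      apply Real.exp_lt_exp.mpr
      positivity
    have hE2' : exp (2 * β / n) - 1 ≠ 0 := by linarith
    have hE1 : (0:ℝ) < exp (β / n) + 1 := by positivity
    have hsn : s n ≠ 0 := by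
      simp only [hs_def]; positivity
    simp only [Dtilde, L1, L2, L3, ht_def, hs_def, he_def, mul_one_div]
    push_cast
    field_simp
    ring
  -- limits of the building blocks
  have hden : Tendsto (fun n => e n + 1) atTop (nhds 2) := by
    have := he.add (tendsto_const_nhds (x := (1:ℝ)))
    norm_num at this
    exact this
  have hem1 : Tendsto (fun n => e n - 1) atTop (nhds 0) := by
    have := he.sub (tendsto_const_nhds (x := (1:ℝ)))
    norm_num at this
    exact this
  have hte : Tendsto (fun n => t n + (e n - 1)) atTop (nhds β) := by
    have := ht.add hem1
    simpa using this
  have h2te : Tendsto (fun n => 2 * t n + (e n - 1)) atTop (nhds (2 * β)) := by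
    have := ((ht.const_mul 2).add hem1)
    simpa using this
  have h4te : Tendsto (fun n => 4 * t n + (e n - 1)) atTop (nhds (4 * β)) := by
    have := ((ht.const_mul 4).add hem1)
    simpa using this
  have hnum1 : Tendsto (fun n => 2 + t n + (e n - 1)) atTop (nhds (2 + β)) := by
    have := ((tendsto_const_nhds (x := (2:ℝ))).add ht).add hem1
    simpa using this
  have hnum2 : Tendsto (fun n => 2 + 2 * t n + (e n - 1)) atTop (nhds (2 + 2 * β)) := by
    have := ((tendsto_const_nhds (x := (2:ℝ))).add (ht.const_mul 2)).add hem1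
    simpa using this
  have hs2 : (2:ℝ) * β ≠ 0 := by positivity
  have hinv1 : Tendsto (fun n => 1 / s n) atTop (nhds (1 / (2 * β))) :=
    (tendsto_const_nhds (x := (1:ℝ))).div hs hs2
  have hinv2 : Tendsto (fun n => 2 / s n) atTop (nhds (2 / (2 * β))) :=
    (tendsto_const_nhds (x := (2:ℝ))).div hs hs2
  -- limit of Dn
  set B : ℝ := (2 + β) / 2 * (1 / (2 * β) * (β * (2 * β) / 6 + β + 1)) - ((2 + β) / 2 / 2) ^ 2
    with hB_def
  have hDnT : Tendsto (fun n => Dn β n) atTop (nhds B) := by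
    refine Tendsto.congr' (hDnEq.mono fun n h => h.symm) ?_
    exact ((hnum1.div hden two_ne_zero).mul
        (hinv1.mul (((hte.mul h2te).div_const 6).add hte |>.add tendsto_const_nhds))).sub
      (((hnum1.div hden two_ne_zero).div_const 2).pow 2)
  -- limit of Dtilde
  set A : ℝ := (2 + 2 * β) / 2 * (2 / (2 * β) * (2 * β * (4 * β) / 6 + 2 * β + 1))
      - ((2 + 2 * β) / 2) ^ 2 with hA_def
  have hDtT : Tendsto (fun n => Dtilde β n) atTop (nhds A) := by
    refine Tendsto.congr' (hDtEq.mono fun n h => h.symm) ?_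
    exact ((hnum2.div hden two_ne_zero).mul
        (hinv2.mul (((h2te.mul h4te).div_const 6).add h2te |>.add tendsto_const_nhds))).sub
      ((hnum2.div hden two_ne_zero).pow 2)
  -- identify the limits
  have hBval : B = (2 + β) * (β ^ 2 + 6 * β + 12) / (48 * β) := by
    rw [hB_def]; field_simp; ring
  have hAval : A = (1 + β) * (β ^ 2 + 3 * β + 3) / (3 * β) := by
    rw [hA_def]; field_simp; ring
  have hBne : B ≠ 0 := by
    rw [hBval]; positivity
  have := hDtT.div hDnT hBne
  convert this using 2
  · rfl
  rw [hAval, hBval, div_div_div_comm]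
  have h1 : β + 2 ≠ 0 := by positivity
  have h2 : β ^ 2 + 6 * β + 12 ≠ 0 := by positivity
  have h3 : (3:ℝ) * β / (48 * β) = 1 / 16 := by field_simp; ring
  rw [h3]
  field_simp
  ring
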